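/- Let Λ_g be the set of block sizes occurring in partitions of a category of partitions D, and Λ_k the set of block sizes occurring in the noncrossing partitions of D. Then Λ_k ⊆ Λ_g ⊆ Λ_k ∪ (Λ_k − 1). -/

import Mathlib

/-- A partition between `k` upper and `l` lower points, viewed as the
equivalence relation (setoid) on the points whose classes are the blocks. -/
abbrev PartitionKL (k l : ℕ) := Setoid (Fin k ⊕ Fin l)

/-- Placing two partitions side by side (disjoint union). -/
def sideBySide {α β : Type*} (p : Setoid α) (q : Setoid β) : Setoid (α ⊕ β) where
  r x y := match x, y with
    | .inl a, .inl b => p a b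
    | .inr a, .inr b => q a b
    | _, _ => False
  iseqv := by
    constructor
    · rintro (a | a)
      · exact p.refl a
      · exact q.refl a
    · rintro (a | a) (b | b) h
      · exact p.symm h
      · exact h.elim
      · exact h.elim
      · exact q.symm h
    · rintro (a | a) (b | b) (c | c) h1 h2 <;> first
        | exact h1.elim | exact h2.elim
        | exact p.trans h1 h2 | exact q.trans h1 h2

/-- Horizontal concatenation (tensor product) of partitions. -/
def tensorPart {k l k' l' : ℕ} (p : PartitionKL k l) (q : PartitionKL k' l') :
    PartitionKL (k + k') (l + l') :=
  Setoid.comap (fun x => match x with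
    | .inl i => match finSumFinEquiv.symm i with
      | .inl a => Sum.inl (Sum.inl a)
      | .inr a => Sum.inr (Sum.inl a)
    | .inr j => match finSumFinEquiv.symm j with
      | .inl b => Sum.inl (Sum.inr b)
      | .inr b => Sum.inr (Sum.inr b))
    (sideBySide p q)

/-- Vertical concatenation (composition) of partitions: place `p ∈ P(k,l)` on
top of `q ∈ P(l,m)`, join blocks across the middle `l` points, and restrict to
the outer `k + m` points (closed middle components disappear). -/
def compPart {k l m : ℕ} (p : PartitionKL k l) (q : PartitionKL l m) :
    PartitionKL k m :=
  Setoid.comap (Sum.map id Sum.inr)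
    (Relation.EqvGen.setoid (fun x y : Fin k ⊕ (Fin l ⊕ Fin m) => match x, y with
      | .inl a, .inl b => p (.inl a) (.inl b)
      | .inl a, .inr (.inl b) => p (.inl a) (.inr b)
      | .inr (.inl a), .inl b => p (.inr a) (.inl b)
      | .inr (.inl a), .inr (.inl b) => p (.inr a) (.inr b) ∨ q (.inl a) (.inl b)
      | .inr (.inl a), .inr (.inr b) => q (.inl a) (.inr b)
      | .inr (.inr a), .inr (.inl b) => q (.inr a) (.inl b)
      | .inr (.inr a), .inr (.inr b) => q (.inr a) (.inr b)
      | _, _ => False))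

/-- Upside-down turning of a partition. -/
def flipPart {k l : ℕ} (p : PartitionKL k l) : PartitionKL l k :=
  Setoid.comap Sum.swap p

/-- A category of partitions: a collection `D(k,l) ⊆ P(k,l)` closed under
horizontal and vertical concatenation and upside-down turning, and containing
the identity pairing and the semicircle `∩ ∈ P(0,2)`. -/
structure PartitionCategory where
  mem : ∀ k l : ℕ, Set (PartitionKL k l)
  tensor_mem : ∀ {k l k' l'} {p : PartitionKL k l} {q : PartitionKL k' l'},
    p ∈ mem k l → q ∈ mem k' l' → tensorPart p q ∈ mem (k + k') (l + l')
  comp_mem : ∀ {k l m} {p : PartitionKL k l} {q : PartitionKL l m},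
    p ∈ mem k l → q ∈ mem l m → compPart p q ∈ mem k m
  flip_mem : ∀ {k l} {p : PartitionKL k l}, p ∈ mem k l → flipPart p ∈ mem l k
  id_mem : (⊤ : PartitionKL 1 1) ∈ mem 1 1
  semicircle_mem : (⊤ : PartitionKL 0 2) ∈ mem 0 2

/-- The position of a point when the `k + l` points are traversed
counterclockwise starting from bottom left. -/
def ord {k l : ℕ} : Fin k ⊕ Fin l → ℕ
  | .inl i => l + (k - 1 - i.val)
  | .inr j => j.val

/-- A partition is noncrossing when its strings can be drawn without
crossings. -/
def NoncrossingKL {k l : ℕ} (p : PartitionKL k l) : Prop :=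
  ∀ a b c d : Fin k ⊕ Fin l, ord a < ord b → ord b < ord c → ord c < ord d →
    p a c → p b d → p a b

/-- The set of block sizes occurring in partitions of the category `C`. -/
def lambdaG (C : PartitionCategory) : Set ℕ :=
  {n | ∃ k l, ∃ p ∈ C.mem k l, ∃ x, n = Set.ncard {y | p x y}}

/-- The set of block sizes occurring in noncrossing partitions of `C`. -/
def lambdaK (C : PartitionCategory) : Set ℕ :=
  {n | ∃ k l, ∃ p ∈ C.mem k l, NoncrossingKL p ∧ ∃ x, n = Set.ncard {y | p x y}}
namespace BlockAux

lemma symm_lt {k k' : ℕ} (i : Fin (k + k')) (h : i.val < k) :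
    finSumFinEquiv.symm i = Sum.inl ⟨i.val, h⟩ := by
  rw [Equiv.symm_apply_eq]; exact Fin.ext rfl

lemma symm_ge {k k' : ℕ} (i : Fin (k + k')) (h : k ≤ i.val) :
    finSumFinEquiv.symm i = Sum.inr ⟨i.val - k, by omega⟩ := by
  rw [Equiv.symm_apply_eq]; exact Fin.ext (by simp [finSumFinEquiv]; omega)

/-- identity partition on m points -/
def idN (m : ℕ) : PartitionKL m m := Setoid.ker (Sum.elim Fin.val Fin.val)

lemma idN_rel {m : ℕ} (x y : Fin m ⊕ Fin m) :
    idN m x y ↔ Sum.elim Fin.val Fin.val x = Sum.elim Fin.val Fin.val y := Iff.rfl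

/-- the "cup" : 2 upper points joined, no lower points -/
def cup20 : PartitionKL 2 0 := flipPart ⊤

section tensorEval
variable {k l k' l' : ℕ} (p : PartitionKL k l) (q : PartitionKL k' l')

lemma tensor_ll_ll (a b : Fin (k + k')) (ha : a.val < k) (hb : b.val < k) :
    tensorPart p q (.inl a) (.inl b) ↔ p (.inl ⟨a.val, ha⟩) (.inl ⟨b.val, hb⟩) := by
  rw [tensorPart, Setoid.comap_rel]; simp only [symm_lt a ha, symm_lt b hb]; exact Iff.rfl

lemma tensor_ll_rr (a b : Fin (k + k')) (ha : k ≤ a.val) (hb : k ≤ b.val) :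
    tensorPart p q (.inl a) (.inl b) ↔
      q (.inl ⟨a.val - k, by omega⟩) (.inl ⟨b.val - k, by omega⟩) := by
  rw [tensorPart, Setoid.comap_rel]; simp only [symm_ge a ha, symm_ge b hb]; exact Iff.rfl

lemma tensor_ll_lr (a b : Fin (k + k')) (ha : a.val < k) (hb : k ≤ b.val) :
    ¬ tensorPart p q (.inl a) (.inl b) := by
  rw [tensorPart, Setoid.comap_rel]; simp only [symm_lt a ha, symm_ge b hb]; exact fun h => h

lemma tensor_ll_rl (a b : Fin (k + k')) (ha : k ≤ a.val) (hb : b.val < k) :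
    ¬ tensorPart p q (.inl a) (.inl b) := by
  rw [tensorPart, Setoid.comap_rel]; simp only [symm_ge a ha, symm_lt b hb]; exact fun h => h

lemma tensor_lr_ll (a : Fin (k + k')) (b : Fin (l + l')) (ha : a.val < k) (hb : b.val < l) :
    tensorPart p q (.inl a) (.inr b) ↔ p (.inl ⟨a.val, ha⟩) (.inr ⟨b.val, hb⟩) := by
  rw [tensorPart, Setoid.comap_rel]; simp only [symm_lt a ha, symm_lt b hb]; exact Iff.rfl

lemma tensor_lr_rr (a : Fin (k + k')) (b : Fin (l + l')) (ha : k ≤ a.val) (hb : l ≤ b.val) :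
    tensorPart p q (.inl a) (.inr b) ↔
      q (.inl ⟨a.val - k, by omega⟩) (.inr ⟨b.val - l, by omega⟩) := by
  rw [tensorPart, Setoid.comap_rel]; simp only [symm_ge a ha, symm_ge b hb]; exact Iff.rfl

lemma tensor_lr_lr (a : Fin (k + k')) (b : Fin (l + l')) (ha : a.val < k) (hb : l ≤ b.val) :
    ¬ tensorPart p q (.inl a) (.inr b) := by
  rw [tensorPart, Setoid.comap_rel]; simp only [symm_lt a ha, symm_ge b hb]; exact fun h => h

lemma tensor_lr_rl (a : Fin (k + k')) (b : Fin (l + l')) (ha : k ≤ a.val) (hb : b.val < l) :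
    ¬ tensorPart p q (.inl a) (.inr b) := by
  rw [tensorPart, Setoid.comap_rel]; simp only [symm_ge a ha, symm_lt b hb]; exact fun h => h

lemma tensor_rr_ll (a b : Fin (l + l')) (ha : a.val < l) (hb : b.val < l) :
    tensorPart p q (.inr a) (.inr b) ↔ p (.inr ⟨a.val, ha⟩) (.inr ⟨b.val, hb⟩) := by
  rw [tensorPart, Setoid.comap_rel]; simp only [symm_lt a ha, symm_lt b hb]; exact Iff.rfl

lemma tensor_rr_rr (a b : Fin (l + l')) (ha : l ≤ a.val) (hb : l ≤ b.val) :
    tensorPart p q (.inr a) (.inr b) ↔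
      q (.inr ⟨a.val - l, by omega⟩) (.inr ⟨b.val - l, by omega⟩) := by
  rw [tensorPart, Setoid.comap_rel]; simp only [symm_ge a ha, symm_ge b hb]; exact Iff.rfl

lemma tensor_rr_lr (a b : Fin (l + l')) (ha : a.val < l) (hb : l ≤ b.val) :
    ¬ tensorPart p q (.inr a) (.inr b) := by
  rw [tensorPart, Setoid.comap_rel]; simp only [symm_lt a ha, symm_ge b hb]; exact fun h => h

lemma tensor_rr_rl (a b : Fin (l + l')) (ha : l ≤ a.val) (hb : b.val < l) :
    ¬ tensorPart p q (.inr a) (.inr b) := by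
  rw [tensorPart, Setoid.comap_rel]; simp only [symm_ge a ha, symm_lt b hb]; exact fun h => h

lemma tensor_rl_ll (a : Fin (l + l')) (b : Fin (k + k')) (ha : a.val < l) (hb : b.val < k) :
    tensorPart p q (.inr a) (.inl b) ↔ p (.inr ⟨a.val, ha⟩) (.inl ⟨b.val, hb⟩) := by
  rw [tensorPart, Setoid.comap_rel]; simp only [symm_lt a ha, symm_lt b hb]; exact Iff.rfl

lemma tensor_rl_rr (a : Fin (l + l')) (b : Fin (k + k')) (ha : l ≤ a.val) (hb : k ≤ b.val) :
    tensorPart p q (.inr a) (.inl b) ↔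
      q (.inr ⟨a.val - l, by omega⟩) (.inl ⟨b.val - k, by omega⟩) := by
  rw [tensorPart, Setoid.comap_rel]; simp only [symm_ge a ha, symm_ge b hb]; exact Iff.rfl

lemma tensor_rl_lr (a : Fin (l + l')) (b : Fin (k + k')) (ha : a.val < l) (hb : k ≤ b.val) :
    ¬ tensorPart p q (.inr a) (.inl b) := by
  rw [tensorPart, Setoid.comap_rel]; simp only [symm_lt a ha, symm_ge b hb]; exact fun h => h

lemma tensor_rl_rl (a : Fin (l + l')) (b : Fin (k + k')) (ha : l ≤ a.val) (hb : b.val < k) :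
    ¬ tensorPart p q (.inr a) (.inl b) := by
  rw [tensorPart, Setoid.comap_rel]; simp only [symm_ge a ha, symm_lt b hb]; exact fun h => h

end tensorEval

end BlockAux
namespace BlockAux

section classes
variable {α : Type*} (p : Setoid α)

lemma class_eq_of_rel {a b : α} (h : p a b) : {y | p a y} = {y | p b y} :=
  Set.ext fun z => ⟨fun h2 => p.trans (p.symm h) h2, fun h2 => p.trans h h2⟩

lemma class_disjoint {a b : α} (h : ¬ p a b) : Disjoint {y | p a y} {y | p b y} :=
  Set.disjoint_left.mpr fun z hza hzb => h (p.trans hza (p.symm hzb))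

lemma mem_class_self (a : α) : a ∈ {y | p a y} := p.refl a

end classes

variable (C : PartitionCategory)

lemma idN_zero_eq : idN 0 = compPart (⊤ : PartitionKL 0 2) cup20 := by
  apply Setoid.ext
  intro a
  rcases a with a | a <;> exact a.elim0

lemma idN_succ_eq (m : ℕ) : tensorPart (idN m) (⊤ : PartitionKL 1 1) = idN (m+1) := by
  apply Setoid.ext
  intro a b
  rcases a with a | a <;> rcases b with b | b
  · by_cases ha : a.val < m <;> by_cases hb : b.val < m
    · rw [tensor_ll_ll _ _ a b ha hb, idN_rel, idN_rel]; simp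
    · rw [iff_iff_implies_and_implies]
      constructor
      · intro h; exact absurd h (tensor_ll_lr _ _ a b ha (by omega))
      · intro h; rw [idN_rel] at h; simp at h; omega
    · rw [iff_iff_implies_and_implies]
      constructor
      · intro h; exact absurd h (tensor_ll_rl _ _ a b (by omega) hb)
      · intro h; rw [idN_rel] at h; simp at h; omega
    · rw [tensor_ll_rr _ _ a b (by omega) (by omega), idN_rel]
      simp only [Sum.elim_inl]
      constructor
      · intro _; omega
      · intro _; trivial
  · by_cases ha : a.val < m <;> by_cases hb : b.val < m
    · rw [tensor_lr_ll _ _ a b ha hb, idN_rel, idN_rel]; simp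
    · rw [iff_iff_implies_and_implies]
      constructor
      · intro h; exact absurd h (tensor_lr_lr _ _ a b ha (by omega))
      · intro h; rw [idN_rel] at h; simp at h; omega
    · rw [iff_iff_implies_and_implies]
      constructor
      · intro h; exact absurd h (tensor_lr_rl _ _ a b (by omega) hb)
      · intro h; rw [idN_rel] at h; simp at h; omega
    · rw [tensor_lr_rr _ _ a b (by omega) (by omega), idN_rel]
      simp only [Sum.elim_inl, Sum.elim_inr]
      constructor
      · intro _; omega
      · intro _; trivial
  · by_cases ha : a.val < m <;> by_cases hb : b.val < m
    · rw [tensor_rl_ll _ _ a b ha hb, idN_rel, idN_rel]; simp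
    · rw [iff_iff_implies_and_implies]
      constructor
      · intro h; exact absurd h (tensor_rl_lr _ _ a b ha (by omega))
      · intro h; rw [idN_rel] at h; simp at h; omega
    · rw [iff_iff_implies_and_implies]
      constructor
      · intro h; exact absurd h (tensor_rl_rl _ _ a b (by omega) hb)
      · intro h; rw [idN_rel] at h; simp at h; omega
    · rw [tensor_rl_rr _ _ a b (by omega) (by omega), idN_rel]
      simp only [Sum.elim_inl, Sum.elim_inr]
      constructor
      · intro _; omega
      · intro _; trivial
  · by_cases ha : a.val < m <;> by_cases hb : b.val < m
    · rw [tensor_rr_ll _ _ a b ha hb, idN_rel, idN_rel]; simp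
    · rw [iff_iff_implies_and_implies]
      constructor
      · intro h; exact absurd h (tensor_rr_lr _ _ a b ha (by omega))
      · intro h; rw [idN_rel] at h; simp at h; omega
    · rw [iff_iff_implies_and_implies]
      constructor
      · intro h; exact absurd h (tensor_rr_rl _ _ a b (by omega) hb)
      · intro h; rw [idN_rel] at h; simp at h; omega
    · rw [tensor_rr_rr _ _ a b (by omega) (by omega), idN_rel]
      simp only [Sum.elim_inr]
      constructor
      · intro _; omega
      · intro _; trivial

lemma cup20_mem : cup20 ∈ C.mem 2 0 := C.flip_mem C.semicircle_mem

lemma idN_mem (m : ℕ) : idN m ∈ C.mem m m := by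
  induction m with
  | zero => rw [idN_zero_eq]; exact C.comp_mem C.semicircle_mem (cup20_mem C)
  | succ m ih => rw [← idN_succ_eq]; exact C.tensor_mem ih C.id_mem

/-- elementary cap partition: identity on `j + m` strands with a cup joining
the upper points `j` and `j+1`. -/
def capAt (j m : ℕ) : PartitionKL (j+2+m) (j+m) :=
  tensorPart (tensorPart (idN j) cup20) (idN m)

lemma capAt_mem (j m : ℕ) : capAt j m ∈ C.mem (j+2+m) (j+m) := by
  have h1 : tensorPart (idN j) cup20 ∈ C.mem (j+2) (j+0) :=
    C.tensor_mem (idN_mem C j) (cup20_mem C)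
  exact C.tensor_mem h1 (idN_mem C m)

end BlockAux
namespace BlockAux

lemma cup20_rel (x y : Fin 2 ⊕ Fin 0) : cup20 x y := trivial

lemma capAt_tt {j m : ℕ} (a b : Fin (j+2+m)) :
    capAt j m (.inl a) (.inl b) ↔
      (a.val = b.val ∨ (j ≤ a.val ∧ a.val < j+2 ∧ j ≤ b.val ∧ b.val < j+2)) := by
  unfold capAt
  by_cases ha : a.val < j+2 <;> by_cases hb : b.val < j+2
  · rw [tensor_ll_ll (tensorPart (idN j) cup20) (idN m) a b ha hb]
    by_cases ha' : a.val < j <;> by_cases hb' : b.val < j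
    · rw [tensor_ll_ll (idN j) cup20 ⟨a.val, ha⟩ ⟨b.val, hb⟩ ha' hb', idN_rel]
      simp only [Sum.elim_inl]
      constructor
      · intro h; left; exact h
      · intro h
        rcases h with h | h
        · exact h
        · omega
    · have := tensor_ll_lr (idN j) cup20 ⟨a.val, ha⟩ ⟨b.val, hb⟩ ha'
        (by omega : j ≤ (b:ℕ))
      constructor
      · intro h; exact absurd h this
      · intro h; exfalso; rcases h with h | h <;> omega
    · have := tensor_ll_rl (idN j) cup20 ⟨a.val, ha⟩ ⟨b.val, hb⟩
        (by omega : j ≤ (a:ℕ)) hb'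
      constructor
      · intro h; exact absurd h this
      · intro h; exfalso; rcases h with h | h <;> omega
    · rw [tensor_ll_rr (idN j) cup20 ⟨a.val, ha⟩ ⟨b.val, hb⟩
        (by omega : j ≤ (a:ℕ)) (by omega : j ≤ (b:ℕ))]
      constructor
      · intro _; right; omega
      · intro _; exact cup20_rel _ _
  · have := tensor_ll_lr (tensorPart (idN j) cup20) (idN m) a b ha (by omega)
    constructor
    · intro h; exact absurd h this
    · intro h; exfalso; rcases h with h | h <;> omega
  · have := tensor_ll_rl (tensorPart (idN j) cup20) (idN m) a b (by omega) hb
    constructor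
    · intro h; exact absurd h this
    · intro h; exfalso; rcases h with h | h <;> omega
  · rw [tensor_ll_rr (tensorPart (idN j) cup20) (idN m) a b (by omega) (by omega), idN_rel]
    simp only [Sum.elim_inl]
    constructor
    · intro h
      have h' : a.val - (j+2) = b.val - (j+2) := h
      left; omega
    · intro h
      show a.val - (j+2) = b.val - (j+2)
      rcases h with h | h <;> omega

lemma capAt_tb {j m : ℕ} (a : Fin (j+2+m)) (b : Fin (j+m)) :
    capAt j m (.inl a) (.inr b) ↔
      ((b.val < j ∧ a.val = b.val) ∨ (j ≤ b.val ∧ a.val = b.val + 2)) := by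
  unfold capAt
  by_cases ha : a.val < j+2 <;> by_cases hb : b.val < j
  · rw [tensor_lr_ll (tensorPart (idN j) cup20) (idN m) a b ha (by omega : (b:ℕ) < j+0)]
    by_cases ha' : a.val < j
    · rw [tensor_lr_ll (idN j) cup20 ⟨a.val, ha⟩ ⟨b.val, by omega⟩ ha' (by omega : (b:ℕ) < j),
        idN_rel]
      simp only [Sum.elim_inl, Sum.elim_inr]
      constructor
      · intro h; left; exact ⟨hb, h⟩
      · intro h
        rcases h with h | h
        · exact h.2
        · omega
    · have := tensor_lr_rl (idN j) cup20 ⟨a.val, ha⟩ ⟨b.val, by omega⟩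
        (by omega : j ≤ (a:ℕ)) (by omega : (b:ℕ) < j)
      constructor
      · intro h; exact absurd h this
      · intro h; exfalso; rcases h with h | h <;> omega
  · have := tensor_lr_lr (tensorPart (idN j) cup20) (idN m) a b ha (by omega : j+0 ≤ (b:ℕ))
    constructor
    · intro h; exact absurd h this
    · intro h; exfalso; rcases h with h | h <;> omega
  · have := tensor_lr_rl (tensorPart (idN j) cup20) (idN m) a b (by omega) (by omega : (b:ℕ) < j+0)
    constructor
    · intro h; exact absurd h this
    · intro h; exfalso; rcases h with h | h <;> omega
  · rw [tensor_lr_rr (tensorPart (idN j) cup20) (idN m) a b (by omega) (by omega : j+0 ≤ (b:ℕ)),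
      idN_rel]
    simp only [Sum.elim_inl, Sum.elim_inr]
    constructor
    · intro h
      have h' : a.val - (j+2) = b.val - (j+0) := h
      right; omega
    · intro h
      show a.val - (j+2) = b.val - (j+0)
      rcases h with h | h <;> omega

lemma capAt_bb {j m : ℕ} (a b : Fin (j+m)) :
    capAt j m (.inr a) (.inr b) ↔ a = b := by
  unfold capAt
  by_cases ha : a.val < j <;> by_cases hb : b.val < j
  · rw [tensor_rr_ll (tensorPart (idN j) cup20) (idN m) a b
      (by omega : (a:ℕ) < j+0) (by omega : (b:ℕ) < j+0)]
    rw [tensor_rr_ll (idN j) cup20 ⟨a.val, by omega⟩ ⟨b.val, by omega⟩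
      (by omega : (a:ℕ) < j) (by omega : (b:ℕ) < j), idN_rel]
    simp only [Sum.elim_inr]
    constructor
    · intro h; exact Fin.ext h
    · intro h; rw [h]
  · have := tensor_rr_lr (tensorPart (idN j) cup20) (idN m) a b
      (by omega : (a:ℕ) < j+0) (by omega : j+0 ≤ (b:ℕ))
    constructor
    · intro h; exact absurd h this
    · intro h; exfalso; rw [h] at ha; exact hb (by omega)
  · have := tensor_rr_rl (tensorPart (idN j) cup20) (idN m) a b
      (by omega : j+0 ≤ (a:ℕ)) (by omega : (b:ℕ) < j+0)
    constructor
    · intro h; exact absurd h this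
    · intro h; exfalso; rw [h] at ha; exact ha (by omega)
  · rw [tensor_rr_rr (tensorPart (idN j) cup20) (idN m) a b
      (by omega : j+0 ≤ (a:ℕ)) (by omega : j+0 ≤ (b:ℕ)), idN_rel]
    simp only [Sum.elim_inr]
    constructor
    · intro h
      have h' : a.val - (j+0) = b.val - (j+0) := h
      exact Fin.ext (by omega)
    · intro h
      show a.val - (j+0) = b.val - (j+0)
      rw [h]

lemma capAt_bt {j m : ℕ} (a : Fin (j+m)) (b : Fin (j+2+m)) :
    capAt j m (.inr a) (.inl b) ↔
      ((a.val < j ∧ b.val = a.val) ∨ (j ≤ a.val ∧ b.val = a.val + 2)) := by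
  constructor
  · intro h; exact (capAt_tb b a).mp ((capAt j m).symm h)
  · intro h; exact (capAt j m).symm ((capAt_tb b a).mpr h)

end BlockAux
namespace BlockAux

def skipE {j m : ℕ} (v : Fin (j+m)) : Fin (j+2+m) :=
  if h : v.val < j then ⟨v.val, by omega⟩ else ⟨v.val + 2, by omega⟩

lemma skipE_val_lt {j m : ℕ} (v : Fin (j+m)) (h : v.val < j) : (skipE v).val = v.val := by
  unfold skipE; rw [dif_pos h]

lemma skipE_val_ge {j m : ℕ} (v : Fin (j+m)) (h : ¬ v.val < j) : (skipE v).val = v.val + 2 := by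
  unfold skipE; rw [dif_neg h]

lemma skipE_ne_lo {j m : ℕ} (v : Fin (j+m)) : (skipE v).val ≠ j := by
  by_cases h : v.val < j
  · rw [skipE_val_lt v h]; omega
  · rw [skipE_val_ge v h]; omega

lemma skipE_ne_hi {j m : ℕ} (v : Fin (j+m)) : (skipE v).val ≠ j + 1 := by
  by_cases h : v.val < j
  · rw [skipE_val_lt v h]; omega
  · rw [skipE_val_ge v h]; omega

lemma skipE_inj {j m : ℕ} : Function.Injective (skipE (j := j) (m := m)) := by
  intro u v h
  apply Fin.ext
  have hu := skipE_val_lt u; have hv := skipE_val_lt v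
  have hu' := skipE_val_ge u; have hv' := skipE_val_ge v
  by_cases h1 : u.val < j <;> by_cases h2 : v.val < j
  · have := (hu h1).symm.trans (congrArg Fin.val h) |>.trans (hv h2); omega
  · have := (hu h1).symm.trans (congrArg Fin.val h) |>.trans (hv' h2); omega
  · have := (hu' h1).symm.trans (congrArg Fin.val h) |>.trans (hv h2); omega
  · have := (hu' h1).symm.trans (congrArg Fin.val h) |>.trans (hv' h2); omega

lemma skipE_surj {j m : ℕ} (w : Fin (j+2+m)) (h1 : w.val ≠ j) (h2 : w.val ≠ j+1) :
    ∃ v : Fin (j+m), skipE v = w := by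
  by_cases h : w.val < j
  · exact ⟨⟨w.val, by omega⟩, Fin.ext (by rw [skipE_val_lt _ (by exact h)])⟩
  · refine ⟨⟨w.val - 2, by omega⟩, Fin.ext ?_⟩
    rw [skipE_val_ge _ (by simp; omega)]
    simp; omega

def jlo (j m : ℕ) : Fin (j+2+m) := ⟨j, by omega⟩
def jhi (j m : ℕ) : Fin (j+2+m) := ⟨j+1, by omega⟩

/-- the join relation: `p` with the classes of `j`, `j+1` merged -/
def JoinRel {k j m : ℕ} (p : PartitionKL k (j+2+m)) (a b : Fin k ⊕ Fin (j+2+m)) : Prop :=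
  p a b ∨ ((p a (.inr (jlo j m)) ∨ p a (.inr (jhi j m))) ∧
           (p b (.inr (jlo j m)) ∨ p b (.inr (jhi j m))))

section joinrel
variable {k j m : ℕ} (p : PartitionKL k (j+2+m))

lemma JoinRel.of_rel {a b} (h : p a b) : JoinRel p a b := Or.inl h

lemma JoinRel.rfl' (a) : JoinRel p a a := Or.inl (p.refl a)

lemma JoinRel.symm' {a b} (h : JoinRel p a b) : JoinRel p b a := by
  rcases h with h | ⟨h1, h2⟩
  · exact Or.inl (p.symm h)
  · exact Or.inr ⟨h2, h1⟩

lemma JoinRel.trans' {a b c} (h : JoinRel p a b) (h' : JoinRel p b c) : JoinRel p a c := by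
  rcases h with h | ⟨h1, h2⟩ <;> rcases h' with h' | ⟨h3, h4⟩
  · exact Or.inl (p.trans h h')
  · exact Or.inr ⟨h3.imp (fun hh => p.trans h hh) (fun hh => p.trans h hh), h4⟩
  · exact Or.inr ⟨h1, h2.imp (fun hh => p.trans (p.symm h') hh)
      (fun hh => p.trans (p.symm h') hh)⟩
  · exact Or.inr ⟨h1, h4⟩

end joinrel

/-- the generating relation used in `compPart` -/
def compR {k l m : ℕ} (p : PartitionKL k l) (q : PartitionKL l m) :
    (Fin k ⊕ (Fin l ⊕ Fin m)) → (Fin k ⊕ (Fin l ⊕ Fin m)) → Prop := fun x y =>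
  match x, y with
    | .inl a, .inl b => p (.inl a) (.inl b)
    | .inl a, .inr (.inl b) => p (.inl a) (.inr b)
    | .inr (.inl a), .inl b => p (.inr a) (.inl b)
    | .inr (.inl a), .inr (.inl b) => p (.inr a) (.inr b) ∨ q (.inl a) (.inl b)
    | .inr (.inl a), .inr (.inr b) => q (.inl a) (.inr b)
    | .inr (.inr a), .inr (.inl b) => q (.inr a) (.inl b)
    | .inr (.inr a), .inr (.inr b) => q (.inr a) (.inr b)
    | _, _ => False

lemma compPart_rel {k l m : ℕ} (p : PartitionKL k l) (q : PartitionKL l m)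
    (a b : Fin k ⊕ Fin m) :
    compPart p q a b ↔
      Relation.EqvGen (compR p q) (Sum.map id Sum.inr a) (Sum.map id Sum.inr b) := Iff.rfl

def embE {k j m : ℕ} : Fin k ⊕ Fin (j+m) → Fin k ⊕ Fin (j+2+m) := Sum.map id skipE

def liftE {k j m : ℕ} : Fin k ⊕ Fin (j+2+m) → Fin k ⊕ (Fin (j+2+m) ⊕ Fin (j+m)) :=
  Sum.map id Sum.inl

def projE {k j m : ℕ} : Fin k ⊕ (Fin (j+2+m) ⊕ Fin (j+m)) → Fin k ⊕ Fin (j+2+m) := fun x =>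
  match x with
  | .inl i => .inl i
  | .inr (.inl t) => .inr t
  | .inr (.inr u) => .inr (skipE u)

section glue
variable {k j m : ℕ} (p : PartitionKL k (j+2+m))

lemma glue_forward {x y} (h : Relation.EqvGen (compR p (capAt j m)) x y) :
    JoinRel p (projE x) (projE y) := by
  induction h with
  | rel x y hr =>
    rcases x with i | x' <;> rcases y with i' | y'
    · exact JoinRel.of_rel p hr
    · rcases y' with t | u
      · exact JoinRel.of_rel p hr
      · exact hr.elim
    · rcases x' with t | u
      · exact JoinRel.of_rel p hr
      · exact hr.elim
    · rcases x' with t | u <;> rcases y' with t' | u'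
      · rcases hr with hr | hr
        · exact JoinRel.of_rel p hr
        · rcases (capAt_tt t t').mp hr with h' | h'
          · have : t = t' := Fin.ext h'
            rw [this]; exact JoinRel.rfl' p _
          · obtain ⟨ha1, ha2, hb1, hb2⟩ := h'
            refine Or.inr ⟨?_, ?_⟩
            · rcases Nat.lt_or_ge t.val (j+1) with hv | hv
              · left; have : t = jlo j m := Fin.ext (show t.val = j by omega)
                rw [this]; exact p.refl _
              · right; have : t = jhi j m := Fin.ext (show t.val = j+1 by omega)
                rw [this]; exact p.refl _
            · rcases Nat.lt_or_ge t'.val (j+1) with hv | hv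
              · left; have : t' = jlo j m := Fin.ext (show t'.val = j by omega)
                rw [this]; exact p.refl _
              · right; have : t' = jhi j m := Fin.ext (show t'.val = j+1 by omega)
                rw [this]; exact p.refl _
      · have h' := (capAt_tb t u').mp hr
        have : t = skipE u' := by
          apply Fin.ext
          rcases h' with ⟨h1, h2⟩ | ⟨h1, h2⟩
          · rw [skipE_val_lt u' h1]; exact h2
          · rw [skipE_val_ge u' (by omega)]; exact h2
        show JoinRel p (.inr t) (.inr (skipE u'))
        rw [this]; exact JoinRel.rfl' p _
      · have h' := (capAt_bt u t').mp hr
        have : t' = skipE u := by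
          apply Fin.ext
          rcases h' with ⟨h1, h2⟩ | ⟨h1, h2⟩
          · rw [skipE_val_lt u h1]; exact h2
          · rw [skipE_val_ge u (by omega)]; exact h2
        show JoinRel p (.inr (skipE u)) (.inr t')
        rw [this]; exact JoinRel.rfl' p _
      · have h' := (capAt_bb u u').mp hr
        show JoinRel p (.inr (skipE u)) (.inr (skipE u'))
        rw [h']; exact JoinRel.rfl' p _
  | refl x => exact JoinRel.rfl' p _
  | symm x y _ ih => exact JoinRel.symm' p ih
  | trans x y z _ _ ih1 ih2 => exact JoinRel.trans' p ih1 ih2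

lemma stepP {c d} (h : p c d) :
    Relation.EqvGen (compR p (capAt j m)) (liftE c) (liftE d) := by
  apply Relation.EqvGen.rel
  rcases c with i | t <;> rcases d with i' | t'
  · exact h
  · exact h
  · exact h
  · exact Or.inl h

lemma bridgeE (x : Fin k ⊕ Fin (j+m)) :
    Relation.EqvGen (compR p (capAt j m)) (Sum.map id Sum.inr x) (liftE (embE x)) := by
  rcases x with i | u
  · exact Relation.EqvGen.refl _
  · apply Relation.EqvGen.rel
    show capAt j m (.inr u) (.inl (skipE u))
    apply (capAt_bt u (skipE u)).mpr
    by_cases h : u.val < j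
    · exact Or.inl ⟨h, skipE_val_lt u h⟩
    · exact Or.inr ⟨by omega, skipE_val_ge u h⟩

lemma jbridge :
    Relation.EqvGen (compR p (capAt j m))
      (liftE (.inr (jlo j m))) (liftE (.inr (jhi j m))) := by
  apply Relation.EqvGen.rel
  show p (.inr (jlo j m)) (.inr (jhi j m)) ∨ capAt j m (.inl (jlo j m)) (.inl (jhi j m))
  right
  apply (capAt_tt _ _).mpr
  exact Or.inr ⟨show j ≤ j from le_rfl, show j < j+2 by omega,
    show j ≤ j+1 by omega, show j+1 < j+2 by omega⟩

lemma glue (a b : Fin k ⊕ Fin (j+m)) :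
    compPart p (capAt j m) a b ↔ JoinRel p (embE a) (embE b) := by
  rw [compPart_rel]
  constructor
  · intro h
    have h' := glue_forward p h
    have ea : projE (Sum.map id Sum.inr a) = embE a := by rcases a with i | u <;> rfl
    have eb : projE (Sum.map id Sum.inr b) = embE b := by rcases b with i | u <;> rfl
    rwa [ea, eb] at h'
  · intro h
    have hb1 := bridgeE p a
    have hb2 := bridgeE p b
    rcases h with h | ⟨h1, h2⟩
    · exact hb1.trans _ _ _ ((stepP p h).trans _ _ _ (hb2.symm _ _))
    · have c1 : Relation.EqvGen (compR p (capAt j m)) (liftE (embE a)) (liftE (embE b)) := by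
        rcases h1 with h1 | h1 <;> rcases h2 with h2 | h2
        · exact (stepP p h1).trans _ _ _ ((stepP p h2).symm _ _)
        · exact (stepP p h1).trans _ _ _ ((jbridge p).trans _ _ _ ((stepP p h2).symm _ _))
        · exact (stepP p h1).trans _ _ _ (((jbridge p).symm _ _).trans _ _ _
            ((stepP p h2).symm _ _))
        · exact (stepP p h1).trans _ _ _ ((stepP p h2).symm _ _)
      exact hb1.trans _ _ _ (c1.trans _ _ _ (hb2.symm _ _))

end glue
end BlockAux
namespace BlockAux

section caps
variable {k j m : ℕ} (p : PartitionKL k (j+2+m))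

lemma embE_inj : Function.Injective (embE (k := k) (j := j) (m := m)) := by
  intro a b h
  rcases a with i | u <;> rcases b with i' | u' <;> simp [embE] at h ⊢
  · exact h
  · exact skipE_inj h

lemma embE_range :
    Set.range (embE (k := k) (j := j) (m := m)) =
      {w | w ≠ .inr (jlo j m) ∧ w ≠ .inr (jhi j m)} := by
  ext w
  constructor
  · rintro ⟨z, rfl⟩
    rcases z with i | u
    · exact ⟨Sum.inl_ne_inr, Sum.inl_ne_inr⟩
    · constructor
      · intro h
        rw [embE] at h
        simp only [Sum.map_inr] at h
        exact skipE_ne_lo u (congrArg Fin.val (Sum.inr_injective h) : _)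
      · intro h
        rw [embE] at h
        simp only [Sum.map_inr] at h
        exact skipE_ne_hi u (congrArg Fin.val (Sum.inr_injective h) : _)
  · rintro ⟨h1, h2⟩
    rcases w with i | t
    · exact ⟨Sum.inl i, rfl⟩
    · have ht1 : t.val ≠ j := fun e => h1 (by rw [show t = jlo j m from Fin.ext e])
      have ht2 : t.val ≠ j + 1 := fun e => h2 (by rw [show t = jhi j m from Fin.ext e])
      obtain ⟨v, hv⟩ := skipE_surj t ht1 ht2
      exact ⟨Sum.inr v, by simp [embE, hv]⟩

lemma capped_class (z : Fin k ⊕ Fin (j+m)) :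
    {y | compPart p (capAt j m) z y} = embE ⁻¹' {w | JoinRel p (embE z) w} := by
  ext y
  exact glue p z y

lemma ncard_embE_preimage (S : Set (Fin k ⊕ Fin (j+2+m))) :
    (embE ⁻¹' S).ncard = (S \ {Sum.inr (jlo j m), Sum.inr (jhi j m)}).ncard := by
  rw [← Set.ncard_image_of_injective _ embE_inj, Set.image_preimage_eq_inter_range, embE_range]
  congr 1
  ext w
  simp only [Set.mem_inter_iff, Set.mem_setOf_eq, Set.mem_diff, Set.mem_insert_iff,
    Set.mem_singleton_iff]
  tauto

lemma JK_not_meet (a : Fin k ⊕ Fin (j+2+m))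
    (h1 : ¬ p a (.inr (jlo j m))) (h2 : ¬ p a (.inr (jhi j m))) :
    {w | JoinRel p a w} = {w | p a w} := by
  ext w
  constructor
  · rintro (h | ⟨ha, _⟩)
    · exact h
    · exact absurd ha (by tauto)
  · exact fun h => Or.inl h

lemma JK_meet (a : Fin k ⊕ Fin (j+2+m))
    (h : p a (.inr (jlo j m)) ∨ p a (.inr (jhi j m))) :
    {w | JoinRel p a w} =
      {w | p (.inr (jlo j m)) w} ∪ {w | p (.inr (jhi j m)) w} := by
  ext w
  constructor
  · rintro (hw | ⟨_, hw⟩)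
    · rcases h with h | h
      · exact Or.inl (p.trans (p.symm h) hw)
      · exact Or.inr (p.trans (p.symm h) hw)
    · rcases hw with hw | hw
      · exact Or.inl (p.symm hw)
      · exact Or.inr (p.symm hw)
  · rintro (hw | hw)
    · exact Or.inr ⟨h, Or.inl (p.symm hw)⟩
    · exact Or.inr ⟨h, Or.inr (p.symm hw)⟩

lemma cap_ncard_not_meet (z : Fin k ⊕ Fin (j+m))
    (h1 : ¬ p (embE z) (.inr (jlo j m))) (h2 : ¬ p (embE z) (.inr (jhi j m))) :
    {y | compPart p (capAt j m) z y}.ncard = {w | p (embE z) w}.ncard := by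
  rw [capped_class, ncard_embE_preimage, JK_not_meet p _ h1 h2]
  congr 1
  ext w
  simp only [Set.mem_diff, Set.mem_setOf_eq, Set.mem_insert_iff, Set.mem_singleton_iff]
  constructor
  · exact fun hw => hw.1
  · intro hw
    refine ⟨hw, ?_⟩
    rintro (rfl | rfl)
    · exact h1 hw
    · exact h2 hw

lemma jlo_ne_jhi : (jlo j m) ≠ (jhi j m) := by
  intro h
  have := congrArg Fin.val h
  simp [jlo, jhi] at this

lemma cap_ncard_meet (z : Fin k ⊕ Fin (j+m))
    (h : p (embE z) (.inr (jlo j m)) ∨ p (embE z) (.inr (jhi j m))) :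
    {y | compPart p (capAt j m) z y}.ncard =
      ({w | p (.inr (jlo j m)) w} ∪ {w | p (.inr (jhi j m)) w}).ncard - 2 := by
  rw [capped_class, ncard_embE_preimage, JK_meet p _ h]
  rw [Set.ncard_diff ?sub (Set.toFinite _)]
  · rw [Set.ncard_pair (fun h => jlo_ne_jhi (Sum.inr_injective h))]
  case sub =>
    rintro w (rfl | rfl)
    · exact Or.inl (p.refl _)
    · exact Or.inr (p.refl _)

lemma exists_embE_preimage (w : Fin k ⊕ Fin (j+2+m))
    (h1 : w ≠ .inr (jlo j m)) (h2 : w ≠ .inr (jhi j m)) :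
    ∃ z, embE (j := j) (m := m) z = w := by
  have : w ∈ Set.range (embE (k := k) (j := j) (m := m)) := by
    rw [embE_range]; exact ⟨h1, h2⟩
  exact this

end caps
end BlockAux
namespace BlockAux

lemma noncrossing_of_single {k l : ℕ} (p : PartitionKL k l) (x : Fin k ⊕ Fin l)
    (h : ∀ y z, p y z → y ≠ z → p x y) : NoncrossingKL p := by
  intro a b c d h1 h2 h3 hac hbd
  have hac' : a ≠ c := by
    intro e; rw [e] at h1; omega
  have hbd' : b ≠ d := by
    intro e; rw [e] at h2; omega
  exact p.trans (p.symm (h a c hac hac')) (h b d hbd hbd')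

lemma swap_preimage_ncard {α β : Type*} (S : Set (α ⊕ β)) :
    (Sum.swap ⁻¹' S).ncard = S.ncard := by
  have he : Sum.swap ⁻¹' S = Sum.swap '' S := by
    ext y
    simp only [Set.mem_preimage, Set.mem_image]
    constructor
    · intro h; exact ⟨Sum.swap y, h, Sum.swap_swap y⟩
    · rintro ⟨z, hz, rfl⟩; simpa [Sum.swap_swap] using hz
  rw [he, Set.ncard_image_of_injective _ (fun a b h => by
    rw [← Sum.swap_swap a, h, Sum.swap_swap])]

lemma flip_class_ncard {k l : ℕ} (p : PartitionKL k l) (x : Fin l ⊕ Fin k) :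
    {y | flipPart p x y}.ncard = {y | p (Sum.swap x) y}.ncard := by
  have he : {y | flipPart p x y} = Sum.swap ⁻¹' {y | p (Sum.swap x) y} := rfl
  rw [he, swap_preimage_ncard]

lemma two_le_class_ncard {α : Type*} [Finite α] (p : Setoid α) {a b : α}
    (h : p a b) (hne : b ≠ a) : 2 ≤ {y | p a y}.ncard := by
  have hsub : {a, b} ⊆ {y | p a y} := by
    rintro w (rfl | rfl)
    · exact p.refl _
    · exact h
  calc 2 = ({a, b} : Set α).ncard := (Set.ncard_pair (Ne.symm hne)).symm
    _ ≤ _ := Set.ncard_le_ncard hsub (Set.toFinite _)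

lemma one_le_class_ncard {α : Type*} [Finite α] (p : Setoid α) (a : α) :
    1 ≤ {y | p a y}.ncard := by
  have : ({y | p a y} : Set α).Nonempty := ⟨a, p.refl a⟩
  have := Set.ncard_pos (Set.toFinite {y | p a y}) |>.mpr this
  omega

variable (C : PartitionCategory)

lemma doCap {k n : ℕ} (p : PartitionKL k n) (hp : p ∈ C.mem k n)
    (u : ℕ) (hu : u + 2 ≤ n) (m : ℕ) (hm1 : 1 ≤ m)
    (H : (∃ a, ¬ p a (.inr ⟨u, by omega⟩) ∧ ¬ p a (.inr ⟨u+1, by omega⟩) ∧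
            m ≤ {y | p a y}.ncard) ∨
         m + 2 ≤ ({y | p (.inr ⟨u, by omega⟩) y} ∪ {y | p (.inr ⟨u+1, by omega⟩) y}).ncard) :
    ∃ k₂ l₂, ∃ p₂ : PartitionKL k₂ l₂, p₂ ∈ C.mem k₂ l₂ ∧ k₂ + l₂ + 2 = k + n ∧
      ∃ x₂, m ≤ {y | p₂ x₂ y}.ncard := by
  obtain ⟨m₂, rfl⟩ : ∃ m₂, n = u + 2 + m₂ := ⟨n - u - 2, by omega⟩
  refine ⟨k, u + m₂, compPart p (capAt u m₂),
    C.comp_mem hp (capAt_mem C u m₂), by omega, ?_⟩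
  rcases H with ⟨a, h1, h2, hm'⟩ | hbig
  · have ha1 : a ≠ .inr (jlo u m₂) := by
      intro e; apply h1; rw [e]; exact p.refl _
    have ha2 : a ≠ .inr (jhi u m₂) := by
      intro e; apply h2; rw [e]; exact p.refl _
    obtain ⟨z, rfl⟩ := exists_embE_preimage a ha1 ha2
    refine ⟨z, ?_⟩
    rw [cap_ncard_not_meet p z h1 h2]
    exact hm'
  · have hsub : ({Sum.inr (jlo u m₂), Sum.inr (jhi u m₂)} :
        Set (Fin k ⊕ Fin (u+2+m₂))) ⊆
        {y | p (.inr (jlo u m₂)) y} ∪ {y | p (.inr (jhi u m₂)) y} := by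
      rintro w (rfl | rfl)
      · exact Or.inl (p.refl _)
      · exact Or.inr (p.refl _)
    have hdiff : 1 ≤ (({y | p (.inr (jlo u m₂)) y} ∪ {y | p (.inr (jhi u m₂)) y})
        \ {Sum.inr (jlo u m₂), Sum.inr (jhi u m₂)}).ncard := by
      rw [Set.ncard_diff hsub (Set.toFinite _),
        Set.ncard_pair (fun h => jlo_ne_jhi (Sum.inr_injective h))]
      have : m + 2 ≤ ({y | p (.inr (jlo u m₂)) y} ∪ {y | p (.inr (jhi u m₂)) y}).ncard := hbig
      omega
    have hne : (({y | p (.inr (jlo u m₂)) y} ∪ {y | p (.inr (jhi u m₂)) y})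
        \ {Sum.inr (jlo u m₂), Sum.inr (jhi u m₂)}).Nonempty := by
      rw [← Set.ncard_pos (Set.toFinite _)]; omega
    obtain ⟨w, hw, hwpair⟩ := hne
    simp only [Set.mem_insert_iff, Set.mem_singleton_iff, not_or] at hwpair
    obtain ⟨z, rfl⟩ := exists_embE_preimage w hwpair.1 hwpair.2
    have hmeet : p (embE z) (.inr (jlo u m₂)) ∨ p (embE z) (.inr (jhi u m₂)) := by
      rcases hw with hw | hw
      · exact Or.inl (p.symm hw)
      · exact Or.inr (p.symm hw)
    refine ⟨z, ?_⟩
    rw [cap_ncard_meet p z hmeet]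
    have : m + 2 ≤ ({y | p (.inr (jlo u m₂)) y} ∪ {y | p (.inr (jhi u m₂)) y}).ncard := hbig
    omega

/-- big non-class block with a leg in the bottom row -/
lemma bigcase {k l : ℕ} (p : PartitionKL k l) (hp : p ∈ C.mem k l)
    (x : Fin k ⊕ Fin l) (m : ℕ) (hm1 : 1 ≤ m) (hms : m ≤ {y | p x y}.ncard)
    (w : Fin l) (hl : 2 ≤ l) (hw : ¬ p x (.inr w))
    (hbig : 2 ≤ {y | p (.inr w) y}.ncard)
    (HAb : ∀ u, u + 2 ≤ l → ∀ (h : u + 2 ≤ l),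
      p x (.inr ⟨u, by omega⟩) ∨ p x (.inr ⟨u+1, by omega⟩)) :
    ∃ k₂ l₂, ∃ p₂ : PartitionKL k₂ l₂, p₂ ∈ C.mem k₂ l₂ ∧ k₂ + l₂ + 2 = k + l ∧
      ∃ x₂, m ≤ {y | p₂ x₂ y}.ncard := by
  have hdisj : Disjoint {y | p x y} {y | p (.inr w) y} := class_disjoint p hw
  by_cases hwl : w.val + 2 ≤ l
  · -- neighbour to the right
    have hv : p x (.inr ⟨w.val + 1, by omega⟩) := by
      rcases HAb w.val hwl hwl with h | h
      · exact absurd (show p x (.inr w) from by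
          have : (⟨w.val, by omega⟩ : Fin l) = w := Fin.ext rfl
          rwa [this] at h) hw
      · exact h
    apply doCap C p hp w.val hwl m hm1
    right
    have e1 : {y | p (.inr (⟨w.val, by omega⟩ : Fin l)) y} = {y | p (.inr w) y} := by
      have : (⟨w.val, by omega⟩ : Fin l) = w := Fin.ext rfl
      rw [this]
    have e2 : {y | p (.inr (⟨w.val + 1, by omega⟩ : Fin l)) y} = {y | p x y} :=
      (class_eq_of_rel p hv).symm
    rw [e1, e2, Set.ncard_union_eq (hdisj.symm) (Set.toFinite _) (Set.toFinite _)]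
    omega
  · -- neighbour to the left
    have hwv : w.val + 1 = l := by omega
    have hu : (w.val - 1) + 2 ≤ l := by omega
    have hv : p x (.inr ⟨w.val - 1, by omega⟩) := by
      rcases HAb (w.val - 1) hu hu with h | h
      · exact h
      · exact absurd (show p x (.inr w) from by
          have : (⟨w.val - 1 + 1, by omega⟩ : Fin l) = w := Fin.ext (show w.val - 1 + 1 = w.val by omega)
          rwa [this] at h) hw
    apply doCap C p hp (w.val - 1) hu m hm1
    right
    have e1 : {y | p (.inr (⟨w.val - 1, by omega⟩ : Fin l)) y} = {y | p x y} :=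
      (class_eq_of_rel p hv).symm
    have e2 : {y | p (.inr (⟨w.val - 1 + 1, by omega⟩ : Fin l)) y} = {y | p (.inr w) y} := by
      have : (⟨w.val - 1 + 1, by omega⟩ : Fin l) = w := Fin.ext (show w.val - 1 + 1 = w.val by omega)
      rw [this]
    rw [e1, e2, Set.ncard_union_eq hdisj (Set.toFinite _) (Set.toFinite _)]
    omega

end BlockAux
namespace BlockAux

variable (C : PartitionCategory)

lemma bigcaseTop {k l : ℕ} (p : PartitionKL k l) (hp : p ∈ C.mem k l)
    (x : Fin k ⊕ Fin l) (m : ℕ) (hm1 : 1 ≤ m) (hms : m ≤ {y | p x y}.ncard)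
    (w : Fin k) (hk : 2 ≤ k) (hw : ¬ p x (.inl w))
    (hbig : 2 ≤ {y | p (.inl w) y}.ncard)
    (HAt : ∀ u, u + 2 ≤ k → ∀ (h : u + 2 ≤ k),
      p x (.inl ⟨u, by omega⟩) ∨ p x (.inl ⟨u+1, by omega⟩)) :
    ∃ k₂ l₂, ∃ p₂ : PartitionKL k₂ l₂, p₂ ∈ C.mem k₂ l₂ ∧ k₂ + l₂ + 2 = k + l ∧
      ∃ x₂, m ≤ {y | p₂ x₂ y}.ncard := by
  have hms' : m ≤ {y | flipPart p (Sum.swap x) y}.ncard := by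
    rw [flip_class_ncard, Sum.swap_swap]; exact hms
  have hw' : ¬ flipPart p (Sum.swap x) (.inr w) := by
    intro hcon
    apply hw
    have : p (Sum.swap (Sum.swap x)) (.inl w) := hcon
    rwa [Sum.swap_swap] at this
  have hbig' : 2 ≤ {y | flipPart p (.inr w) y}.ncard := by
    rw [flip_class_ncard]; exact hbig
  have HAb' : ∀ u, u + 2 ≤ k → ∀ (h : u + 2 ≤ k),
      flipPart p (Sum.swap x) (.inr ⟨u, by omega⟩) ∨
      flipPart p (Sum.swap x) (.inr ⟨u+1, by omega⟩) := by
    intro u h h'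
    rcases HAt u h h' with hh | hh
    · left
      show p (Sum.swap (Sum.swap x)) (.inl ⟨u, by omega⟩)
      rwa [Sum.swap_swap]
    · right
      show p (Sum.swap (Sum.swap x)) (.inl ⟨u+1, by omega⟩)
      rwa [Sum.swap_swap]
  obtain ⟨k₂, l₂, p₂, h1, h2, h3⟩ :=
    bigcase C (flipPart p) (C.flip_mem hp) (Sum.swap x) m hm1 hms' w hk hw' hbig' HAb'
  exact ⟨k₂, l₂, p₂, h1, by omega, h3⟩

lemma smallcase {k l : ℕ} (p : PartitionKL k l) (hp : p ∈ C.mem k l)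
    (x : Fin k ⊕ Fin l) (m : ℕ) (hm1 : 1 ≤ m) (hms : m ≤ {y | p x y}.ncard)
    (hs3 : m + 2 ≤ {y | p x y}.ncard)
    (hSing : ∀ y, ¬ p x y → ∀ z, p y z → z = y) (hl : 2 ≤ l) :
    ∃ k₂ l₂, ∃ p₂ : PartitionKL k₂ l₂, p₂ ∈ C.mem k₂ l₂ ∧ k₂ + l₂ + 2 = k + l ∧
      ∃ x₂, m ≤ {y | p₂ x₂ y}.ncard := by
  have hu : 0 + 2 ≤ l := by omega
  by_cases h0 : p x (.inr ⟨0, by omega⟩) <;> by_cases h1 : p x (.inr ⟨0+1, by omega⟩)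
  · apply doCap C p hp 0 hu m hm1
    right
    rw [← class_eq_of_rel p h0, ← class_eq_of_rel p h1, Set.union_self]
    omega
  · apply doCap C p hp 0 hu m hm1
    right
    have e1 : {y | p (.inr (⟨0, by omega⟩ : Fin l)) y} = {y | p x y} :=
      (class_eq_of_rel p h0).symm
    have e2 : {y | p (.inr (⟨0+1, by omega⟩ : Fin l)) y} =
        {(.inr (⟨0+1, by omega⟩ : Fin l) : Fin k ⊕ Fin l)} := by
      apply Set.eq_singleton_iff_unique_mem.mpr
      exact ⟨p.refl _, fun z hz => hSing _ h1 z hz⟩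
    have hd : Disjoint {y | p x y}
        ({(.inr (⟨0+1, by omega⟩ : Fin l) : Fin k ⊕ Fin l)} : Set (Fin k ⊕ Fin l)) := by
      rw [Set.disjoint_singleton_right]
      exact h1
    rw [e1, e2, Set.ncard_union_eq hd (Set.toFinite _) (Set.toFinite _), Set.ncard_singleton]
    omega
  · apply doCap C p hp 0 hu m hm1
    right
    have e1 : {y | p (.inr (⟨0, by omega⟩ : Fin l)) y} =
        {(.inr (⟨0, by omega⟩ : Fin l) : Fin k ⊕ Fin l)} := by
      apply Set.eq_singleton_iff_unique_mem.mpr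
      exact ⟨p.refl _, fun z hz => hSing _ h0 z hz⟩
    have e2 : {y | p (.inr (⟨0+1, by omega⟩ : Fin l)) y} = {y | p x y} :=
      (class_eq_of_rel p h1).symm
    have hd : Disjoint {(.inr (⟨0, by omega⟩ : Fin l) : Fin k ⊕ Fin l)} {y | p x y} := by
      rw [Set.disjoint_singleton_left]
      exact h0
    rw [e1, e2, Set.ncard_union_eq hd (Set.toFinite _) (Set.toFinite _), Set.ncard_singleton]
    omega
  · exact doCap C p hp 0 hu m hm1 (Or.inl ⟨x, h0, h1, hms⟩)

lemma smallcaseTop {k l : ℕ} (p : PartitionKL k l) (hp : p ∈ C.mem k l)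
    (x : Fin k ⊕ Fin l) (m : ℕ) (hm1 : 1 ≤ m) (hms : m ≤ {y | p x y}.ncard)
    (hs3 : m + 2 ≤ {y | p x y}.ncard)
    (hSing : ∀ y, ¬ p x y → ∀ z, p y z → z = y) (hk : 2 ≤ k) :
    ∃ k₂ l₂, ∃ p₂ : PartitionKL k₂ l₂, p₂ ∈ C.mem k₂ l₂ ∧ k₂ + l₂ + 2 = k + l ∧
      ∃ x₂, m ≤ {y | p₂ x₂ y}.ncard := by
  have hms' : m ≤ {y | flipPart p (Sum.swap x) y}.ncard := by
    rw [flip_class_ncard, Sum.swap_swap]; exact hms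
  have hs3' : m + 2 ≤ {y | flipPart p (Sum.swap x) y}.ncard := by
    rw [flip_class_ncard, Sum.swap_swap]; exact hs3
  have hSing' : ∀ y, ¬ flipPart p (Sum.swap x) y → ∀ z, flipPart p y z → z = y := by
    intro y hy z hz
    have hy' : ¬ p x (Sum.swap y) := by
      intro hcon
      apply hy
      show p (Sum.swap (Sum.swap x)) (Sum.swap y)
      rwa [Sum.swap_swap]
    have := hSing (Sum.swap y) hy' (Sum.swap z) hz
    have := congrArg Sum.swap this
    rwa [Sum.swap_swap, Sum.swap_swap] at this
  obtain ⟨k₂, l₂, p₂, h1, h2, h3⟩ :=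
    smallcase C (flipPart p) (C.flip_mem hp) (Sum.swap x) m hm1 hms' hs3' hSing' hk
  exact ⟨k₂, l₂, p₂, h1, by omega, h3⟩

lemma class_ncard_le {k l : ℕ} (p : PartitionKL k l) (x : Fin k ⊕ Fin l) :
    {y | p x y}.ncard ≤ k + l := by
  have h1 := Set.ncard_le_ncard (Set.subset_univ {y | p x y}) (Set.toFinite _)
  rwa [Set.ncard_univ, Nat.card_eq_fintype_card, Fintype.card_sum, Fintype.card_fin,
    Fintype.card_fin] at h1

end BlockAux
namespace BlockAux

lemma mainLemma (C : PartitionCategory) :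
    ∀ M k l (p : PartitionKL k l), k + l ≤ M → p ∈ C.mem k l →
    ∀ (x : Fin k ⊕ Fin l) (m : ℕ), 1 ≤ m → m ≤ {y | p x y}.ncard →
    ∃ k' l', ∃ q : PartitionKL k' l', q ∈ C.mem k' l' ∧ NoncrossingKL q ∧
      ∃ z, {y | q z y}.ncard = m ∨ {y | q z y}.ncard = m + 1 := by
  intro M
  induction M with
  | zero =>
    intro k l p hM hp x
    rcases x with x | x
    · exact absurd x.isLt (by omega)
    · exact absurd x.isLt (by omega)
  | succ M IH =>
    intro k l p hM hp x m hm1 hms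
    have RECUR : (∃ k₂ l₂, ∃ p₂ : PartitionKL k₂ l₂, p₂ ∈ C.mem k₂ l₂ ∧ k₂ + l₂ + 2 = k + l ∧
        ∃ x₂, m ≤ {y | p₂ x₂ y}.ncard) →
        ∃ k' l', ∃ q : PartitionKL k' l', q ∈ C.mem k' l' ∧ NoncrossingKL q ∧
          ∃ z, {y | q z y}.ncard = m ∨ {y | q z y}.ncard = m + 1 := by
      rintro ⟨k₂, l₂, p₂, hp₂, hkl, x₂, hx₂⟩
      exact IH k₂ l₂ p₂ (by omega) hp₂ x₂ m hm1 hx₂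
    by_cases hBig : ∃ y, ¬ p x y ∧ ∃ z, p y z ∧ z ≠ y
    · by_cases hA : (∃ u, ∃ _h : u + 2 ≤ l, ¬ p x (.inr ⟨u, by omega⟩) ∧
          ¬ p x (.inr ⟨u+1, by omega⟩)) ∨
          (∃ u, ∃ _h : u + 2 ≤ k, ¬ p x (.inl ⟨u, by omega⟩) ∧ ¬ p x (.inl ⟨u+1, by omega⟩))
      · rcases hA with ⟨u, hu, h1, h2⟩ | ⟨u, hu, h1, h2⟩
        · exact RECUR (doCap C p hp u hu m hm1 (Or.inl ⟨x, h1, h2, hms⟩))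
        · apply RECUR
          have hms' : m ≤ {y | flipPart p (Sum.swap x) y}.ncard := by
            rw [flip_class_ncard, Sum.swap_swap]; exact hms
          have h1' : ¬ flipPart p (Sum.swap x) (.inr ⟨u, by omega⟩) := by
            intro hcon
            apply h1
            have h' : p (Sum.swap (Sum.swap x)) (.inl ⟨u, by omega⟩) := hcon
            rwa [Sum.swap_swap] at h'
          have h2' : ¬ flipPart p (Sum.swap x) (.inr ⟨u+1, by omega⟩) := by
            intro hcon
            apply h2
            have h' : p (Sum.swap (Sum.swap x)) (.inl ⟨u+1, by omega⟩) := hcon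
            rwa [Sum.swap_swap] at h'
          obtain ⟨k₂, l₂, p₂, a1, a2, a3⟩ :=
            doCap C (flipPart p) (C.flip_mem hp) u hu m hm1
              (Or.inl ⟨Sum.swap x, h1', h2', hms'⟩)
          exact ⟨k₂, l₂, p₂, a1, by omega, a3⟩
      · have HAb : ∀ u, u + 2 ≤ l → ∀ (_h : u + 2 ≤ l),
            p x (.inr ⟨u, by omega⟩) ∨ p x (.inr ⟨u+1, by omega⟩) := by
          intro u h _h
          by_contra hc
          push_neg at hc
          exact hA (Or.inl ⟨u, h, hc.1, hc.2⟩)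
        have HAt : ∀ u, u + 2 ≤ k → ∀ (_h : u + 2 ≤ k),
            p x (.inl ⟨u, by omega⟩) ∨ p x (.inl ⟨u+1, by omega⟩) := by
          intro u h _h
          by_contra hc
          push_neg at hc
          exact hA (Or.inr ⟨u, h, hc.1, hc.2⟩)
        obtain ⟨y, hxy, z, hyz, hzy⟩ := hBig
        have hbigy : 2 ≤ {w | p y w}.ncard := two_le_class_ncard p hyz hzy
        rcases y with yi | yj
        · by_cases hk2 : 2 ≤ k
          · exact RECUR (bigcaseTop C p hp x m hm1 hms yi hk2 hxy hbigy HAt)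
          · rcases z with zi | zj
            · exfalso
              apply hzy
              have he : zi = yi := Fin.ext
                (by have u1 := zi.isLt; have u2 := yi.isLt; omega)
              rw [he]
            · have hxz : ¬ p x (.inr zj) := fun hcon => hxy (p.trans hcon (p.symm hyz))
              have hbigz : 2 ≤ {w | p (.inr zj) w}.ncard := by
                rw [← class_eq_of_rel p hyz]
                exact hbigy
              by_cases hl2 : 2 ≤ l
              · exact RECUR (bigcase C p hp x m hm1 hms zj hl2 hxz hbigz HAb)
              · exfalso
                rcases x with xi | xj
                · apply hxy
                  have he : yi = xi := Fin.ext
                    (by have u1 := yi.isLt; have u2 := xi.isLt; omega)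
                  subst he
                  exact p.refl _
                · apply hxz
                  have he : zj = xj := Fin.ext
                    (by have u1 := zj.isLt; have u2 := xj.isLt; omega)
                  subst he
                  exact p.refl _
        · by_cases hl2 : 2 ≤ l
          · exact RECUR (bigcase C p hp x m hm1 hms yj hl2 hxy hbigy HAb)
          · rcases z with zi | zj
            · have hxz : ¬ p x (.inl zi) := fun hcon => hxy (p.trans hcon (p.symm hyz))
              have hbigz : 2 ≤ {w | p (.inl zi) w}.ncard := by
                rw [← class_eq_of_rel p hyz]
                exact hbigy
              by_cases hk2 : 2 ≤ k
              · exact RECUR (bigcaseTop C p hp x m hm1 hms zi hk2 hxz hbigz HAt)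
              · exfalso
                rcases x with xi | xj
                · apply hxz
                  have he : zi = xi := Fin.ext
                    (by have u1 := zi.isLt; have u2 := xi.isLt; omega)
                  subst he
                  exact p.refl _
                · apply hxy
                  have he : yj = xj := Fin.ext
                    (by have u1 := yj.isLt; have u2 := xj.isLt; omega)
                  subst he
                  exact p.refl _
            · exfalso
              apply hzy
              have he : zj = yj := Fin.ext
                (by have u1 := zj.isLt; have u2 := yj.isLt; omega)
              rw [he]
    · have hSing : ∀ y, ¬ p x y → ∀ z, p y z → z = y := by
        intro y hy z hz
        by_contra hne
        exact hBig ⟨y, hy, z, hz, hne⟩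
      by_cases hs2 : {y | p x y}.ncard ≤ m + 1
      · refine ⟨k, l, p, hp, ?_, x, ?_⟩
        · exact noncrossing_of_single p x (fun y z hyz hne => by
            by_contra hxy
            exact hne (hSing y hxy z hyz).symm)
        · omega
      · have hs3 : m + 2 ≤ {y | p x y}.ncard := by omega
        have htot := class_ncard_le p x
        by_cases hl2 : 2 ≤ l
        · exact RECUR (smallcase C p hp x m hm1 hms hs3 hSing hl2)
        · exact RECUR (smallcaseTop C p hp x m hm1 hms hs3 hSing (by omega))

end BlockAux
/-- `Λ_k ⊆ Λ_g ⊆ Λ_k ∪ (Λ_k − 1)`. -/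
theorem block_sizes_inclusions (C : PartitionCategory) :
    lambdaK C ⊆ lambdaG C ∧
    lambdaG C ⊆ lambdaK C ∪ {n | n + 1 ∈ lambdaK C} := by
  constructor
  · rintro n ⟨k, l, p, hp, _hnc, x, hn⟩
    exact ⟨k, l, p, hp, x, hn⟩
  · rintro n ⟨k, l, p, hp, x, hn⟩
    have h1 : 1 ≤ n := by
      rw [hn]
      exact BlockAux.one_le_class_ncard p x
    obtain ⟨k', l', q, hq, hnc, z, hz⟩ :=
      BlockAux.mainLemma C (k + l) k l p le_rfl hp x n h1 (le_of_eq hn)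
    rcases hz with hz | hz
    · exact Or.inl ⟨k', l', q, hq, hnc, z, hz.symm⟩
    · exact Or.inr ⟨k', l', q, hq, hnc, z, hz.symm⟩
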